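/- Square-root diversity lower bound for counter-assisted generators: for any f : ZMod n → ZMod n, the counter-assisted generator x_i = f(x_{i-1}) + i (mod n) satisfies D_G(k) ≥ √(k-1) for all k ≤ n + 1, where D_G(k) is the minimum over seeds of the number of distinct values in any contiguous window of length k of the state sequence. Precisely, for every seed s and every i, the number ν of distinct values among x_i,...,x_{i+k-1} satisfies ν² ≥ k - 1. -/

import Mathlib

/-- Square-root diversity lower bound for counter-assisted generators.
For any `f : ZMod n → ZMod n`, any seed, and any window `x i, …, x (i+k-1)` of the
state sequence `x_i = f (x_{i-1}) + i (mod n)` with `1 ≤ k ≤ n + 1`, the number `ν` of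
distinct values in the window satisfies `ν² ≥ k - 1`. -/
theorem stmt_5 (n : ℕ) (hn : 2 ≤ n) (f : ZMod n → ZMod n)
    (k : ℕ) (hk1 : 1 ≤ k) (hk2 : k ≤ n + 1)
    (s : ZMod n) (x : ℕ → ZMod n) (hx0 : x 0 = s)
    (hx : ∀ i, x (i + 1) = f (x i) + ((i + 1 : ℕ) : ZMod n))
    (i : ℕ) :
    k - 1 ≤ ((Finset.range k).image (fun j => x (i + j))).card ^ 2 := by
  set S := (Finset.range k).image (fun j => x (i + j)) with hS
  have hmem : ∀ j, j < k → x (i + j) ∈ S := by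
    intro j hj
    exact Finset.mem_image.mpr ⟨j, Finset.mem_range.mpr hj, rfl⟩
  have key : (Finset.range (k - 1)).card ≤ (S ×ˢ S).card := by
    apply Finset.card_le_card_of_injOn (fun j => (x (i + j), x (i + j + 1)))
    · intro j hj
      have hj' : j < k - 1 := Finset.mem_range.mp hj
      refine Finset.mem_product.mpr ⟨hmem j (by omega), ?_⟩
      have : x (i + j + 1) = x (i + (j + 1)) := by ring_nf
      beta_reduce
      rw [this]
      exact hmem (j + 1) (by omega)
    · intro a ha b hb hab
      have ha' : a < k - 1 := Finset.mem_range.mp ha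
      have hb' : b < k - 1 := Finset.mem_range.mp hb
      have h1 : x (i + a) = x (i + b) := congrArg Prod.fst hab
      have h2 : x (i + a + 1) = x (i + b + 1) := congrArg Prod.snd hab
      rw [hx (i + a), hx (i + b), h1] at h2
      replace h2 := add_left_cancel h2
      have h3 : ((i + a + 1 : ℕ) : ZMod n) = ((i + b + 1 : ℕ) : ZMod n) := h2
      push_cast at h3
      have h4 : ((a : ℕ) : ZMod n) = ((b : ℕ) : ZMod n) := by
        have := h3
        linear_combination this
      have ha2 : a < n := by omega
      have hb2 : b < n := by omega
      have := congrArg ZMod.val h4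
      rwa [ZMod.val_natCast_of_lt ha2, ZMod.val_natCast_of_lt hb2] at this
  rwa [Finset.card_range, Finset.card_product, ← sq] at key
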